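/- Let n ≥ 2 be even and V = ℂ^{2n} the symplectic model of Jordan type [n,n] as above. If W₁ = span(α vₙ + β wₙ) with α ≠ 0 and β ≠ 0, then the endomorphism induced by x on W₁^⊥/W₁ has Jordan type [n, n−2]; if W₁ = span(vₙ) or span(wₙ), the induced endomorphism has Jordan type [n−1, n−1]. -/

import Mathlib

open Matrix

/-- The nilpotent endomorphism of Jordan type `[n,n]` on `ℂ^(2n)` (the paper's model). -/
def Xnn (n : ℕ) : Matrix (Fin n ⊕ Fin n) (Fin n ⊕ Fin n) ℂ :=
  Matrix.of fun i j =>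
    match i, j with
    | Sum.inl i, Sum.inl j => if (i : ℕ) = (j : ℕ) + 1 then 1 else 0
    | Sum.inr i, Sum.inr j => if (i : ℕ) = (j : ℕ) + 1 then 1 else 0
    | _, _ => 0

/-- The symplectic form of the `[n,n]` model, as a matrix. -/
def Onn (n : ℕ) : Matrix (Fin n ⊕ Fin n) (Fin n ⊕ Fin n) ℂ :=
  Matrix.of fun i j =>
    match i, j with
    | Sum.inl i, Sum.inr j => if (i : ℕ) + (j : ℕ) = n - 1 then (-1 : ℂ) ^ (i : ℕ) else 0
    | Sum.inr i, Sum.inl j => -(if (j : ℕ) + (i : ℕ) = n - 1 then (-1 : ℂ) ^ (j : ℕ) else 0)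
    | _, _ => 0

/-- The vector `α vₙ + β wₙ` spanning the line `W₁ ⊆ Ker x`. -/
noncomputable def u0 (n : ℕ) (hn : 1 ≤ n) (α β : ℂ) : (Fin n ⊕ Fin n) → ℂ :=
  α • (Pi.single (Sum.inl (⟨n - 1, by omega⟩ : Fin n)) 1 : (Fin n ⊕ Fin n) → ℂ) +
    β • (Pi.single (Sum.inr (⟨n - 1, by omega⟩ : Fin n)) 1 : (Fin n ⊕ Fin n) → ℂ)

/-- The `ω`-orthogonal complement `W₁^⊥` of `W₁ = span(α vₙ + β wₙ)`. -/
noncomputable def Wperp (n : ℕ) (hn : 1 ≤ n) (α β : ℂ) :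
    Submodule ℂ ((Fin n ⊕ Fin n) → ℂ) :=
  LinearMap.ker ((Matrix.toLinearMap₂' ℂ (Onn n)).flip (u0 n hn α β))

/-- The line `W₁`, viewed inside `W₁^⊥`. -/
noncomputable def W1in (n : ℕ) (hn : 1 ≤ n) (α β : ℂ) :
    Submodule ℂ (Wperp n hn α β) :=
  Submodule.comap (Wperp n hn α β).subtype (Submodule.span ℂ {u0 n hn α β})



section Abstract
open Submodule LinearMap Module

variable {K : Type*} [Field K] {V : Type*} [AddCommGroup V] [Module K V]

lemma ker_mapQ_eq (p : Submodule K V) (g : V →ₗ[K] V) (h : p ≤ p.comap g) :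
    LinearMap.ker (p.mapQ p g h) = Submodule.map p.mkQ (p.comap g) := by
  ext x
  obtain ⟨y, rfl⟩ := p.mkQ_surjective x
  constructor
  · intro hx
    refine ⟨y, ?_, rfl⟩
    simpa [Submodule.mapQ_apply, Submodule.Quotient.mk_eq_zero] using hx
  · rintro ⟨z, hz, hzy⟩
    have : p.mapQ p g h (p.mkQ z) = p.mapQ p g h (p.mkQ y) := by rw [hzy]
    simp only [Submodule.mkQ_apply, Submodule.mapQ_apply] at this
    simp only [LinearMap.mem_ker, Submodule.mkQ_apply, Submodule.mapQ_apply, ← this,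
      Submodule.Quotient.mk_eq_zero]
    exact hz

lemma finrank_ker_mapQ [FiniteDimensional K V] (p : Submodule K V) (g : V →ₗ[K] V)
    (h : p ≤ p.comap g) :
    finrank K (LinearMap.ker (p.mapQ p g h)) + finrank K p = finrank K (p.comap g) := by
  rw [ker_mapQ_eq]
  set S := p.comap g with hS
  have h1 := LinearMap.finrank_range_add_finrank_ker (p.mkQ ∘ₗ S.subtype)
  rw [LinearMap.range_comp, Submodule.range_subtype, LinearMap.ker_comp, Submodule.ker_mkQ] at h1
  have h2 : finrank K (Submodule.comap S.subtype p) = finrank K p :=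
    (Submodule.comapSubtypeEquivOfLe h).finrank_eq
  rw [h2] at h1
  simpa using h1

lemma finrank_inf_ker_functional [FiniteDimensional K V] (p : Submodule K V) (φ : V →ₗ[K] K)
    (hx : ∃ x ∈ p, φ x ≠ 0) :
    finrank K ↥(p ⊓ LinearMap.ker φ) + 1 = finrank K p := by
  set f := φ ∘ₗ p.subtype with hf
  have hmap : Submodule.map p.subtype (LinearMap.ker f) = p ⊓ LinearMap.ker φ := by
    rw [hf, LinearMap.ker_comp, Submodule.map_comap_subtype]
  have h1 := LinearMap.finrank_range_add_finrank_ker f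
  have hrange : finrank K (LinearMap.range f) = 1 := by
    obtain ⟨x, hxp, hx0⟩ := hx
    have hle : finrank K (LinearMap.range f) ≤ 1 := by
      simpa using Submodule.finrank_le (LinearMap.range f)
    have hne : LinearMap.range f ≠ ⊥ := by
      intro hbot
      apply hx0
      have : f ⟨x, hxp⟩ = 0 := by
        have := LinearMap.mem_range_self f ⟨x, hxp⟩
        rw [hbot] at this
        simpa using this
      simpa [hf] using this
    have hpos : 0 < finrank K (LinearMap.range f) := by
      rcases Nat.eq_zero_or_pos (finrank K (LinearMap.range f)) with h0 | h0
      · exact absurd (Submodule.finrank_eq_zero.mp h0) hne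
      · exact h0
    omega
  have h2 : finrank K ↥(p ⊓ LinearMap.ker φ) = finrank K (LinearMap.ker f) := by
    rw [← hmap]
    exact (Submodule.equivMapOfInjective p.subtype p.injective_subtype _).symm.finrank_eq
  rw [h2, ← h1, hrange, Nat.add_comm]

lemma finrank_ker_funLeft (K : Type*) [Field K] {ι κ : Type*} [Fintype ι] [Fintype κ]
    (f : κ → ι) (hf : Function.Injective f) :
    finrank K (LinearMap.ker (LinearMap.funLeft K K f)) + Fintype.card κ = Fintype.card ι := by
  have h1 := LinearMap.finrank_range_add_finrank_ker (LinearMap.funLeft K K f)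
  rw [LinearMap.range_eq_top.2 (LinearMap.funLeft_surjective_of_injective K K f hf)] at h1
  rw [finrank_top, Module.finrank_fintype_fun_eq_card, Module.finrank_fintype_fun_eq_card] at h1
  omega

end Abstract

section Coord
variable {n : ℕ}

lemma sum_if_val (c : Fin n) (f : Fin n → ℂ) :
    (∑ j : Fin n, if (j : ℕ) = (c : ℕ) then f j else 0) = f c := by
  rw [Finset.sum_eq_single c]
  · simp
  · intro b _ hb
    rw [if_neg fun h => hb (Fin.ext h)]
  · simp

lemma u0_apply_inl (hn : 1 ≤ n) (α β : ℂ) (j : Fin n) :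
    u0 n hn α β (Sum.inl j) = if (j : ℕ) = n - 1 then α else 0 := by
  have h : ((⟨n - 1, by omega⟩ : Fin n) : ℕ) = n - 1 := rfl
  simp only [u0, Pi.add_apply, Pi.smul_apply, smul_eq_mul]
  rw [Pi.single_apply, Pi.single_apply]
  simp only [Sum.inl.injEq, reduceCtorEq, if_false, mul_zero, add_zero, Fin.ext_iff, h]
  split_ifs <;> ring

lemma u0_apply_inr (hn : 1 ≤ n) (α β : ℂ) (j : Fin n) :
    u0 n hn α β (Sum.inr j) = if (j : ℕ) = n - 1 then β else 0 := by
  have h : ((⟨n - 1, by omega⟩ : Fin n) : ℕ) = n - 1 := rfl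
  simp only [u0, Pi.add_apply, Pi.smul_apply, smul_eq_mul]
  rw [Pi.single_apply, Pi.single_apply]
  simp only [Sum.inr.injEq, reduceCtorEq, if_false, mul_zero, zero_add, Fin.ext_iff, h]
  split_ifs <;> ring

lemma Xnn_apply_inl (v : (Fin n ⊕ Fin n) → ℂ) (i : Fin n) :
    (Xnn n).mulVecLin v (Sum.inl i) =
      if h : 0 < (i : ℕ) then v (Sum.inl ⟨(i : ℕ) - 1, by omega⟩) else 0 := by
  simp only [mulVecLin_apply, mulVec, dotProduct, Fintype.sum_sum_type, Xnn, Matrix.of_apply]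
  by_cases h : 0 < (i : ℕ)
  · rw [dif_pos h]
    have : ∀ j : Fin n, ((i : ℕ) = (j : ℕ) + 1) = ((j : ℕ) = ((⟨(i:ℕ)-1, by omega⟩ : Fin n) : ℕ)) := by
      intro j; simp only [eq_iff_iff]; constructor <;> (intro hj; omega)
    simp only [this]
    rw [show (∑ j : Fin n,
        (if (j:ℕ) = ((⟨(i:ℕ)-1, by omega⟩ : Fin n):ℕ) then (1:ℂ) else 0) * v (Sum.inl j)) =
        ∑ j : Fin n, if (j:ℕ) = ((⟨(i:ℕ)-1, by omega⟩ : Fin n):ℕ) then v (Sum.inl j) else 0 from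
      Finset.sum_congr rfl fun j _ => by split_ifs <;> simp]
    rw [sum_if_val]
    simp
  · rw [dif_neg h]
    have : ∀ j : Fin n, ¬((i : ℕ) = (j : ℕ) + 1) := by intro j; omega
    simp [this]

lemma Xnn_apply_inr (v : (Fin n ⊕ Fin n) → ℂ) (i : Fin n) :
    (Xnn n).mulVecLin v (Sum.inr i) =
      if h : 0 < (i : ℕ) then v (Sum.inr ⟨(i : ℕ) - 1, by omega⟩) else 0 := by
  simp only [mulVecLin_apply, mulVec, dotProduct, Fintype.sum_sum_type, Xnn, Matrix.of_apply]
  by_cases h : 0 < (i : ℕ)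
  · rw [dif_pos h]
    have : ∀ j : Fin n, ((i : ℕ) = (j : ℕ) + 1) = ((j : ℕ) = ((⟨(i:ℕ)-1, by omega⟩ : Fin n) : ℕ)) := by
      intro j; simp only [eq_iff_iff]; constructor <;> (intro hj; omega)
    simp only [this]
    rw [show (∑ j : Fin n,
        (if (j:ℕ) = ((⟨(i:ℕ)-1, by omega⟩ : Fin n):ℕ) then (1:ℂ) else 0) * v (Sum.inr j)) =
        ∑ j : Fin n, if (j:ℕ) = ((⟨(i:ℕ)-1, by omega⟩ : Fin n):ℕ) then v (Sum.inr j) else 0 from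
      Finset.sum_congr rfl fun j _ => by split_ifs <;> simp]
    rw [sum_if_val]
    simp
  · rw [dif_neg h]
    have : ∀ j : Fin n, ¬((i : ℕ) = (j : ℕ) + 1) := by intro j; omega
    simp [this]

lemma Xpow_apply_inl (k : ℕ) (v : (Fin n ⊕ Fin n) → ℂ) (i : Fin n) :
    ((Xnn n).mulVecLin ^ k) v (Sum.inl i) =
      if h : k ≤ (i : ℕ) then v (Sum.inl ⟨(i : ℕ) - k, by omega⟩) else 0 := by
  induction k generalizing i with
  | zero => simp
  | succ k ih =>
    rw [pow_succ', Module.End.mul_apply, Xnn_apply_inl]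
    rcases Nat.eq_zero_or_pos (i : ℕ) with h0 | h0
    · rw [dif_neg (by omega)]
      rw [dif_neg (by omega)]
    · rw [dif_pos h0, ih]
      by_cases h2 : k + 1 ≤ (i : ℕ)
      · rw [dif_pos (show k ≤ ((⟨(i:ℕ)-1, by omega⟩ : Fin n) : ℕ) by show k ≤ (i:ℕ)-1; omega), dif_pos h2]
        congr 2
        apply Fin.ext
        show (i : ℕ) - 1 - k = (i : ℕ) - (k + 1)
        omega
      · rw [dif_neg (show ¬ k ≤ ((⟨(i:ℕ)-1, by omega⟩ : Fin n) : ℕ) by show ¬ k ≤ (i:ℕ)-1; omega), dif_neg h2]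

lemma Xpow_apply_inr (k : ℕ) (v : (Fin n ⊕ Fin n) → ℂ) (i : Fin n) :
    ((Xnn n).mulVecLin ^ k) v (Sum.inr i) =
      if h : k ≤ (i : ℕ) then v (Sum.inr ⟨(i : ℕ) - k, by omega⟩) else 0 := by
  induction k generalizing i with
  | zero => simp
  | succ k ih =>
    rw [pow_succ', Module.End.mul_apply, Xnn_apply_inr]
    rcases Nat.eq_zero_or_pos (i : ℕ) with h0 | h0
    · rw [dif_neg (by omega)]
      rw [dif_neg (by omega)]
    · rw [dif_pos h0, ih]
      by_cases h2 : k + 1 ≤ (i : ℕ)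
      · rw [dif_pos (show k ≤ ((⟨(i:ℕ)-1, by omega⟩ : Fin n) : ℕ) by show k ≤ (i:ℕ)-1; omega), dif_pos h2]
        congr 2
        apply Fin.ext
        show (i : ℕ) - 1 - k = (i : ℕ) - (k + 1)
        omega
      · rw [dif_neg (show ¬ k ≤ ((⟨(i:ℕ)-1, by omega⟩ : Fin n) : ℕ) by show ¬ k ≤ (i:ℕ)-1; omega), dif_neg h2]

end Coord

section W
variable {n : ℕ}

lemma sum_mul_if (c : Fin n) (g : Fin n → ℂ) (b : ℂ) :
    (∑ j : Fin n, g j * (if (j : ℕ) = (c : ℕ) then b else 0)) = g c * b := by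
  rw [← sum_if_val c (fun j => g j * b)]
  refine Finset.sum_congr rfl fun j _ => ?_
  split_ifs <;> simp

lemma omega_form (n : ℕ) (hn1 : 1 ≤ n) (heven : Even n) (α β : ℂ)
    (v : (Fin n ⊕ Fin n) → ℂ) :
    (Matrix.toLinearMap₂' ℂ (Onn n)).flip (u0 n hn1 α β) v =
      β * v (Sum.inl (⟨0, by omega⟩ : Fin n)) + α * v (Sum.inr (⟨0, by omega⟩ : Fin n)) := by
  rw [LinearMap.flip_apply, Matrix.toLinearMap₂'_apply]
  simp only [smul_eq_mul]
  rw [Fintype.sum_sum_type]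
  have hc : ((⟨n - 1, by omega⟩ : Fin n) : ℕ) = n - 1 := rfl
  have hL : ∀ i' : Fin n,
      (∑ j : Fin n ⊕ Fin n, v (Sum.inl i') * (u0 n hn1 α β j * Onn n (Sum.inl i') j)) =
        v (Sum.inl i') * (if (i' : ℕ) = 0 then β else 0) := by
    intro i'
    rw [Fintype.sum_sum_type]
    have h1 : (∑ j' : Fin n,
        v (Sum.inl i') * (u0 n hn1 α β (Sum.inl j') * Onn n (Sum.inl i') (Sum.inl j'))) = 0 := by
      apply Finset.sum_eq_zero; intro j' _; simp [Onn]
    rw [h1, zero_add]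
    have h2 : ∀ j' : Fin n,
        v (Sum.inl i') * (u0 n hn1 α β (Sum.inr j') * Onn n (Sum.inl i') (Sum.inr j')) =
          (fun j' => v (Sum.inl i') *
            (β * (if (i' : ℕ) + (j' : ℕ) = n - 1 then (-1 : ℂ) ^ (i' : ℕ) else 0))) j' *
            (if (j' : ℕ) = ((⟨n - 1, by omega⟩ : Fin n) : ℕ) then 1 else 0) := by
      intro j'
      rw [u0_apply_inr]
      simp only [Onn, Matrix.of_apply, hc]
      split_ifs <;> ring
    rw [Finset.sum_congr rfl fun j' _ => h2 j', sum_mul_if]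
    simp only [hc, mul_one]
    rcases Nat.eq_zero_or_pos (i' : ℕ) with h0 | h0
    · rw [if_pos h0, if_pos (by omega), h0, pow_zero, mul_one]
    · rw [if_neg (by omega), if_neg (by omega), mul_zero, mul_zero]
  have hR : ∀ i' : Fin n,
      (∑ j : Fin n ⊕ Fin n, v (Sum.inr i') * (u0 n hn1 α β j * Onn n (Sum.inr i') j)) =
        v (Sum.inr i') * (if (i' : ℕ) = 0 then α else 0) := by
    intro i'
    rw [Fintype.sum_sum_type]
    have h1 : (∑ j' : Fin n,
        v (Sum.inr i') * (u0 n hn1 α β (Sum.inr j') * Onn n (Sum.inr i') (Sum.inr j'))) = 0 := by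
      apply Finset.sum_eq_zero; intro j' _; simp [Onn]
    rw [h1, add_zero]
    have h2 : ∀ j' : Fin n,
        v (Sum.inr i') * (u0 n hn1 α β (Sum.inl j') * Onn n (Sum.inr i') (Sum.inl j')) =
          (fun j' => v (Sum.inr i') *
            (α * (-(if (j' : ℕ) + (i' : ℕ) = n - 1 then (-1 : ℂ) ^ (j' : ℕ) else 0)))) j' *
            (if (j' : ℕ) = ((⟨n - 1, by omega⟩ : Fin n) : ℕ) then 1 else 0) := by
      intro j'
      rw [u0_apply_inl]
      simp only [Onn, Matrix.of_apply, hc]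
      split_ifs <;> ring
    rw [Finset.sum_congr rfl fun j' _ => h2 j', sum_mul_if]
    simp only [hc, mul_one]
    rcases Nat.eq_zero_or_pos (i' : ℕ) with h0 | h0
    · rw [if_pos h0, if_pos (by omega)]
      have hpow : -((-1 : ℂ) ^ (n - 1)) = 1 := by
        have h1n : n - 1 + 1 = n := by omega
        have : (-1 : ℂ) ^ n = 1 := heven.neg_one_pow
        have h2' : ((-1 : ℂ) ^ (n - 1)) * (-1) = (-1 : ℂ) ^ n := by
          rw [← pow_succ, h1n]
        rw [this] at h2'
        linear_combination h2'
      rw [hpow]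
      ring
    · rw [if_neg (by omega), if_neg (by omega)]
      ring
  rw [Finset.sum_congr rfl fun i' _ => hL i', Finset.sum_congr rfl fun i' _ => hR i']
  have e1 : (∑ i' : Fin n, v (Sum.inl i') * (if (i' : ℕ) = 0 then β else 0)) =
      v (Sum.inl (⟨0, by omega⟩ : Fin n)) * β := by
    have h0 : ((⟨0, by omega⟩ : Fin n) : ℕ) = 0 := rfl
    rw [← sum_mul_if (⟨0, by omega⟩ : Fin n) (fun i' => v (Sum.inl i')) β]
  have e2 : (∑ i' : Fin n, v (Sum.inr i') * (if (i' : ℕ) = 0 then α else 0)) =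
      v (Sum.inr (⟨0, by omega⟩ : Fin n)) * α := by
    have h0 : ((⟨0, by omega⟩ : Fin n) : ℕ) = 0 := rfl
    rw [← sum_mul_if (⟨0, by omega⟩ : Fin n) (fun i' => v (Sum.inr i')) α]
  rw [e1, e2]
  ring

lemma mem_Wperp_iff (hn1 : 1 ≤ n) (heven : Even n) (α β : ℂ) (v : (Fin n ⊕ Fin n) → ℂ) :
    v ∈ Wperp n hn1 α β ↔
      β * v (Sum.inl (⟨0, by omega⟩ : Fin n)) + α * v (Sum.inr (⟨0, by omega⟩ : Fin n)) = 0 := by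
  rw [Wperp, LinearMap.mem_ker, omega_form n hn1 heven]

end W

section B
variable {n : ℕ}

lemma vL_congr (v : (Fin n ⊕ Fin n) → ℂ) (a b : Fin n) (h : (a : ℕ) = (b : ℕ)) :
    v (Sum.inl a) = v (Sum.inl b) := congrArg v (congrArg Sum.inl (Fin.ext h))

lemma vR_congr (v : (Fin n ⊕ Fin n) → ℂ) (a b : Fin n) (h : (a : ℕ) = (b : ℕ)) :
    v (Sum.inr a) = v (Sum.inr b) := congrArg v (congrArg Sum.inr (Fin.ext h))

lemma Xpow_eq_inl (k : ℕ) (v : (Fin n ⊕ Fin n) → ℂ) (i j : Fin n) (hij : (i : ℕ) = (j : ℕ) + k) :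
    ((Xnn n).mulVecLin ^ k) v (Sum.inl i) = v (Sum.inl j) := by
  rw [Xpow_apply_inl, dif_pos (by omega : k ≤ (i : ℕ))]
  exact vL_congr v _ j (show (i : ℕ) - k = (j : ℕ) by omega)

lemma Xpow_eq_inr (k : ℕ) (v : (Fin n ⊕ Fin n) → ℂ) (i j : Fin n) (hij : (i : ℕ) = (j : ℕ) + k) :
    ((Xnn n).mulVecLin ^ k) v (Sum.inr i) = v (Sum.inr j) := by
  rw [Xpow_apply_inr, dif_pos (by omega : k ≤ (i : ℕ))]
  exact vR_congr v _ j (show (i : ℕ) - k = (j : ℕ) by omega)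

lemma Xpow_zero_inl (k : ℕ) (v : (Fin n ⊕ Fin n) → ℂ) (i : Fin n) (h : (i : ℕ) < k) :
    ((Xnn n).mulVecLin ^ k) v (Sum.inl i) = 0 := by
  rw [Xpow_apply_inl, dif_neg (by omega)]

lemma Xpow_zero_inr (k : ℕ) (v : (Fin n ⊕ Fin n) → ℂ) (i : Fin n) (h : (i : ℕ) < k) :
    ((Xnn n).mulVecLin ^ k) v (Sum.inr i) = 0 := by
  rw [Xpow_apply_inr, dif_neg (by omega)]

open Classical in
lemma mem_B_iff (hn1 : 1 ≤ n) (α β : ℂ) (hαβ : ¬(α = 0 ∧ β = 0)) (k : ℕ) (hk : k ≤ n - 1)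
    (v : (Fin n ⊕ Fin n) → ℂ) :
    v ∈ Submodule.comap ((Xnn n).mulVecLin ^ k) (Submodule.span ℂ {u0 n hn1 α β}) ↔
      ((∀ j : Fin n, (j : ℕ) + k + 1 < n → v (Sum.inl j) = 0 ∧ v (Sum.inr j) = 0) ∧
        β * v (Sum.inl (⟨n - 1 - k, by omega⟩ : Fin n)) =
          α * v (Sum.inr (⟨n - 1 - k, by omega⟩ : Fin n))) := by
  rw [Submodule.mem_comap, Submodule.mem_span_singleton]
  constructor
  · rintro ⟨c, hc⟩
    constructor
    · intro j hj
      constructor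
      · have h1 := congrFun hc (Sum.inl (⟨(j : ℕ) + k, by omega⟩ : Fin n))
        rw [Pi.smul_apply, smul_eq_mul, u0_apply_inl,
          if_neg (show ¬(((⟨(j : ℕ) + k, by omega⟩ : Fin n) : ℕ) = n - 1) by
            show ¬((j : ℕ) + k = n - 1); omega), mul_zero,
          Xpow_eq_inl k v _ j (show (j : ℕ) + k = (j : ℕ) + k from rfl)] at h1
        exact h1.symm
      · have h1 := congrFun hc (Sum.inr (⟨(j : ℕ) + k, by omega⟩ : Fin n))
        rw [Pi.smul_apply, smul_eq_mul, u0_apply_inr,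
          if_neg (show ¬(((⟨(j : ℕ) + k, by omega⟩ : Fin n) : ℕ) = n - 1) by
            show ¬((j : ℕ) + k = n - 1); omega), mul_zero,
          Xpow_eq_inr k v _ j (show (j : ℕ) + k = (j : ℕ) + k from rfl)] at h1
        exact h1.symm
    · have h2 := congrFun hc (Sum.inl (⟨n - 1, by omega⟩ : Fin n))
      have h3 := congrFun hc (Sum.inr (⟨n - 1, by omega⟩ : Fin n))
      rw [Pi.smul_apply, smul_eq_mul, u0_apply_inl,
        if_pos (show ((⟨n - 1, by omega⟩ : Fin n) : ℕ) = n - 1 from rfl),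
        Xpow_eq_inl k v _ (⟨n - 1 - k, by omega⟩ : Fin n)
          (show n - 1 = n - 1 - k + k by omega)] at h2
      rw [Pi.smul_apply, smul_eq_mul, u0_apply_inr,
        if_pos (show ((⟨n - 1, by omega⟩ : Fin n) : ℕ) = n - 1 from rfl),
        Xpow_eq_inr k v _ (⟨n - 1 - k, by omega⟩ : Fin n)
          (show n - 1 = n - 1 - k + k by omega)] at h3
      rw [← h2, ← h3]
      ring
  · rintro ⟨hzero, hrel⟩
    have hβ0 : α = 0 → β ≠ 0 := by intro h hb; exact hαβ ⟨h, hb⟩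
    refine ⟨if α = 0 then v (Sum.inr (⟨n - 1 - k, by omega⟩ : Fin n)) / β
            else v (Sum.inl (⟨n - 1 - k, by omega⟩ : Fin n)) / α, ?_⟩
    set c := if α = 0 then v (Sum.inr (⟨n - 1 - k, by omega⟩ : Fin n)) / β
            else v (Sum.inl (⟨n - 1 - k, by omega⟩ : Fin n)) / α with hcdef
    have hcα : c * α = v (Sum.inl (⟨n - 1 - k, by omega⟩ : Fin n)) := by
      by_cases hα : α = 0
      · rw [hcdef, if_pos hα, hα, mul_zero]
        have := hrel
        rw [hα, zero_mul] at this
        rcases mul_eq_zero.mp this with h | h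
        · exact absurd h (hβ0 hα)
        · exact h.symm
      · rw [hcdef, if_neg hα, div_mul_cancel₀ _ hα]
    have hcβ : c * β = v (Sum.inr (⟨n - 1 - k, by omega⟩ : Fin n)) := by
      by_cases hα : α = 0
      · rw [hcdef, if_pos hα, div_mul_cancel₀ _ (hβ0 hα)]
      · rw [hcdef, if_neg hα]
        field_simp
        linear_combination hrel
    funext i
    rcases i with j | j
    · rw [Pi.smul_apply, smul_eq_mul, u0_apply_inl]
      rcases lt_or_ge (j : ℕ) k with hjk | hjk
      · rw [Xpow_zero_inl k v j hjk, if_neg (by omega), mul_zero]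
      · rw [Xpow_eq_inl k v j (⟨(j : ℕ) - k, by omega⟩ : Fin n) (show (j : ℕ) = (j : ℕ) - k + k by omega)]
        by_cases hj : (j : ℕ) = n - 1
        · rw [if_pos hj, vL_congr v _ (⟨n - 1 - k, by omega⟩ : Fin n)
            (show (j : ℕ) - k = n - 1 - k by omega)]
          exact hcα
        · rw [if_neg hj, mul_zero,
            (hzero (⟨(j : ℕ) - k, by omega⟩ : Fin n)
              (show ((⟨(j : ℕ) - k, by omega⟩ : Fin n) : ℕ) + k + 1 < n by
                show (j : ℕ) - k + k + 1 < n; omega)).1]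
    · rw [Pi.smul_apply, smul_eq_mul, u0_apply_inr]
      rcases lt_or_ge (j : ℕ) k with hjk | hjk
      · rw [Xpow_zero_inr k v j hjk, if_neg (by omega), mul_zero]
      · rw [Xpow_eq_inr k v j (⟨(j : ℕ) - k, by omega⟩ : Fin n) (show (j : ℕ) = (j : ℕ) - k + k by omega)]
        by_cases hj : (j : ℕ) = n - 1
        · rw [if_pos hj, vR_congr v _ (⟨n - 1 - k, by omega⟩ : Fin n)
            (show (j : ℕ) - k = n - 1 - k by omega)]
          exact hcβ
        · rw [if_neg hj, mul_zero,
            (hzero (⟨(j : ℕ) - k, by omega⟩ : Fin n)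
              (show ((⟨(j : ℕ) - k, by omega⟩ : Fin n) : ℕ) + k + 1 < n by
                show (j : ℕ) - k + k + 1 < n; omega)).2]

end B

section Assemble
open Submodule LinearMap Module

variable {n : ℕ}

lemma u0_ne_zero (hn1 : 1 ≤ n) (α β : ℂ) (hαβ : ¬(α = 0 ∧ β = 0)) : u0 n hn1 α β ≠ 0 := by
  intro h
  apply hαβ
  constructor
  · have := congrFun h (Sum.inl (⟨n - 1, by omega⟩ : Fin n))
    rwa [u0_apply_inl, if_pos (show ((⟨n - 1, by omega⟩ : Fin n) : ℕ) = n - 1 from rfl)] at this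
  · have := congrFun h (Sum.inr (⟨n - 1, by omega⟩ : Fin n))
    rwa [u0_apply_inr, if_pos (show ((⟨n - 1, by omega⟩ : Fin n) : ℕ) = n - 1 from rfl)] at this

lemma u0_mem_Wperp (hn : 2 ≤ n) (hn1 : 1 ≤ n) (heven : Even n) (α β : ℂ) :
    u0 n hn1 α β ∈ Wperp n hn1 α β := by
  rw [mem_Wperp_iff hn1 heven, u0_apply_inl, u0_apply_inr,
    if_neg (show ¬(((⟨0, by omega⟩ : Fin n) : ℕ) = n - 1) by show ¬((0:ℕ) = n-1); omega),
    if_neg (show ¬(((⟨0, by omega⟩ : Fin n) : ℕ) = n - 1) by show ¬((0:ℕ) = n-1); omega)]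
  ring

end Assemble

section Dims
open Submodule LinearMap Module

variable {n : ℕ}

lemma card2n : Fintype.card (Fin n ⊕ Fin n) = 2 * n := by
  simp [Fintype.card_sum]; omega

lemma B_top (hn1 : 1 ≤ n) (α β : ℂ) (k : ℕ) (hk : n ≤ k) :
    Submodule.comap ((Xnn n).mulVecLin ^ k) (Submodule.span ℂ {u0 n hn1 α β}) = ⊤ := by
  rw [Submodule.eq_top_iff']
  intro v
  rw [Submodule.mem_comap]
  have hz : ((Xnn n).mulVecLin ^ k) v = 0 := by
    funext i
    rcases i with j | j
    · rw [Xpow_zero_inl k v j (by omega)]; rfl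
    · rw [Xpow_zero_inr k v j (by omega)]; rfl
  rw [hz]
  exact Submodule.zero_mem _

lemma dim_Wperp (hn : 2 ≤ n) (hn1 : 1 ≤ n) (heven : Even n) (α β : ℂ)
    (hαβ : ¬(α = 0 ∧ β = 0)) : finrank ℂ ↥(Wperp n hn1 α β) + 1 = 2 * n := by
  have hφ : ∃ x, x ∈ (⊤ : Submodule ℂ ((Fin n ⊕ Fin n) → ℂ)) ∧
      ((Matrix.toLinearMap₂' ℂ (Onn n)).flip (u0 n hn1 α β)) x ≠ 0 := by
    by_cases hβ : β = 0
    · have hα : α ≠ 0 := fun h => hαβ ⟨h, hβ⟩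
      refine ⟨Pi.single (Sum.inr (⟨0, by omega⟩ : Fin n)) 1, trivial, ?_⟩
      rw [omega_form n hn1 heven, Pi.single_eq_same,
        Pi.single_eq_of_ne (by simp) 1]
      simpa [hβ] using hα
    · refine ⟨Pi.single (Sum.inl (⟨0, by omega⟩ : Fin n)) 1, trivial, ?_⟩
      rw [omega_form n hn1 heven, Pi.single_eq_same,
        Pi.single_eq_of_ne (by simp) 1]
      simpa using hβ
  have h := finrank_inf_ker_functional (⊤ : Submodule ℂ ((Fin n ⊕ Fin n) → ℂ))
    ((Matrix.toLinearMap₂' ℂ (Onn n)).flip (u0 n hn1 α β)) (by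
      obtain ⟨x, _, hx⟩ := hφ; exact ⟨x, trivial, hx⟩)
  rw [top_inf_eq] at h
  rw [Wperp]
  rw [h, finrank_top, Module.finrank_fintype_fun_eq_card, card2n]

lemma dim_B_small (hn : 2 ≤ n) (hn1 : 1 ≤ n) (heven : Even n) (α β : ℂ)
    (hαβ : ¬(α = 0 ∧ β = 0)) (k : ℕ) (hk : k ≤ n - 2) :
    finrank ℂ ↥(Submodule.comap ((Xnn n).mulVecLin ^ k) (Submodule.span ℂ {u0 n hn1 α β})
      ⊓ Wperp n hn1 α β) = 2 * k + 1 := by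
  set B := Submodule.comap ((Xnn n).mulVecLin ^ k) (Submodule.span ℂ {u0 n hn1 α β}) with hBdef
  have hle : B ≤ Wperp n hn1 α β := by
    intro v hv
    obtain ⟨hzero, -⟩ := (mem_B_iff hn1 α β hαβ k (by omega) v).mp hv
    obtain ⟨h1, h2⟩ := hzero (⟨0, by omega⟩ : Fin n) (by show 0 + k + 1 < n; omega)
    rw [mem_Wperp_iff hn1 heven, h1, h2]
    ring
  rw [inf_eq_left.mpr hle]
  -- the coordinate-vanishing gadget
  have hnk : n - 1 - k ≤ n := by omega
  set g : (Fin (n - 1 - k) ⊕ Fin (n - 1 - k)) → (Fin n ⊕ Fin n) :=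
    Sum.map (Fin.castLE hnk) (Fin.castLE hnk) with hgdef
  have hg : Function.Injective g :=
    Function.Injective.sumMap (Fin.castLE_injective hnk) (Fin.castLE_injective hnk)
  set Z := LinearMap.ker (LinearMap.funLeft ℂ ℂ g) with hZdef
  have hZmem : ∀ v : (Fin n ⊕ Fin n) → ℂ,
      v ∈ Z ↔ ∀ j : Fin n, (j : ℕ) < n - 1 - k → v (Sum.inl j) = 0 ∧ v (Sum.inr j) = 0 := by
    intro v
    rw [hZdef, LinearMap.mem_ker, funext_iff]
    simp only [LinearMap.funLeft_apply, Pi.zero_apply]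
    constructor
    · intro h j hj
      constructor
      · have h2 := h (Sum.inl (⟨(j : ℕ), hj⟩ : Fin (n - 1 - k)))
        rw [hgdef, Sum.map_inl] at h2
        rw [← vL_congr v (Fin.castLE hnk (⟨(j : ℕ), hj⟩ : Fin (n - 1 - k))) j (by simp)]
        exact h2
      · have h2 := h (Sum.inr (⟨(j : ℕ), hj⟩ : Fin (n - 1 - k)))
        rw [hgdef, Sum.map_inr] at h2
        rw [← vR_congr v (Fin.castLE hnk (⟨(j : ℕ), hj⟩ : Fin (n - 1 - k))) j (by simp)]
        exact h2
    · intro h x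
      rcases x with j' | j'
      · rw [hgdef, Sum.map_inl]
        exact (h (Fin.castLE hnk j') (by simpa using j'.isLt)).1
      · rw [hgdef, Sum.map_inr]
        exact (h (Fin.castLE hnk j') (by simpa using j'.isLt)).2
  set ψ : ((Fin n ⊕ Fin n) → ℂ) →ₗ[ℂ] ℂ :=
    β • LinearMap.proj (Sum.inl (⟨n - 1 - k, by omega⟩ : Fin n)) -
      α • LinearMap.proj (Sum.inr (⟨n - 1 - k, by omega⟩ : Fin n)) with hψdef
  have hψ : ∀ v : (Fin n ⊕ Fin n) → ℂ, ψ v =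
      β * v (Sum.inl (⟨n - 1 - k, by omega⟩ : Fin n)) -
        α * v (Sum.inr (⟨n - 1 - k, by omega⟩ : Fin n)) := by
    intro v
    simp [hψdef]
  have hBZ : B = Z ⊓ LinearMap.ker ψ := by
    ext v
    rw [hBdef, mem_B_iff hn1 α β hαβ k (by omega) v, Submodule.mem_inf, hZmem,
      LinearMap.mem_ker, hψ, sub_eq_zero]
    constructor
    · rintro ⟨h1, h2⟩
      exact ⟨fun j hj => h1 j (by omega), h2⟩
    · rintro ⟨h1, h2⟩
      exact ⟨fun j hj => h1 j (by omega), h2⟩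
  have hZrank := finrank_ker_funLeft ℂ g hg
  rw [card2n, card2n, ← hZdef] at hZrank
  have hψne : ∃ x ∈ Z, ψ x ≠ 0 := by
    by_cases hβ : β = 0
    · have hα : α ≠ 0 := fun h => hαβ ⟨h, hβ⟩
      refine ⟨Pi.single (Sum.inr (⟨n - 1 - k, by omega⟩ : Fin n)) 1, ?_, ?_⟩
      · rw [hZmem]
        intro j hj
        constructor
        · exact Pi.single_eq_of_ne (by simp) 1
        · refine Pi.single_eq_of_ne ?_ 1
          simp only [ne_eq, Sum.inr.injEq]
          intro h
          rw [Fin.ext_iff] at h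
          have hval : (j : ℕ) = n - 1 - k := h
          omega
      · rw [hψ, Pi.single_eq_same, Pi.single_eq_of_ne (by simp) 1]
        simpa [hβ] using hα
    · refine ⟨Pi.single (Sum.inl (⟨n - 1 - k, by omega⟩ : Fin n)) 1, ?_, ?_⟩
      · rw [hZmem]
        intro j hj
        constructor
        · refine Pi.single_eq_of_ne ?_ 1
          simp only [ne_eq, Sum.inl.injEq]
          intro h
          rw [Fin.ext_iff] at h
          have hval : (j : ℕ) = n - 1 - k := h
          omega
        · exact Pi.single_eq_of_ne (by simp) 1
      · rw [hψ, Pi.single_eq_same, Pi.single_eq_of_ne (by simp) 1]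
        simpa using hβ
  have hfinal := finrank_inf_ker_functional Z ψ hψne
  rw [hBZ]
  omega

end Dims

section Dims2
open Submodule LinearMap Module

variable {n : ℕ}

lemma dim_B_mid_ne (hn : 2 ≤ n) (hn1 : 1 ≤ n) (heven : Even n) (α β : ℂ)
    (hα : α ≠ 0) (hβ : β ≠ 0) :
    finrank ℂ ↥(Submodule.comap ((Xnn n).mulVecLin ^ (n - 1))
      (Submodule.span ℂ {u0 n hn1 α β}) ⊓ Wperp n hn1 α β) = 2 * n - 2 := by
  have hαβ : ¬(α = 0 ∧ β = 0) := fun h => hα h.1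
  have h1n : (1 : ℕ) ≤ n := hn1
  set g : (Fin 1 ⊕ Fin 1) → (Fin n ⊕ Fin n) :=
    Sum.map (Fin.castLE h1n) (Fin.castLE h1n) with hgdef
  have hg : Function.Injective g :=
    Function.Injective.sumMap (Fin.castLE_injective h1n) (Fin.castLE_injective h1n)
  set Z := LinearMap.ker (LinearMap.funLeft ℂ ℂ g) with hZdef
  have hZmem : ∀ v : (Fin n ⊕ Fin n) → ℂ,
      v ∈ Z ↔ v (Sum.inl (⟨0, by omega⟩ : Fin n)) = 0 ∧
        v (Sum.inr (⟨0, by omega⟩ : Fin n)) = 0 := by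
    intro v
    rw [hZdef, LinearMap.mem_ker, funext_iff]
    simp only [LinearMap.funLeft_apply, Pi.zero_apply]
    constructor
    · intro h
      constructor
      · have h2 := h (Sum.inl (0 : Fin 1))
        rw [hgdef, Sum.map_inl] at h2
        rw [← vL_congr v (Fin.castLE h1n (0 : Fin 1)) (⟨0, by omega⟩ : Fin n) (by simp)]
        exact h2
      · have h2 := h (Sum.inr (0 : Fin 1))
        rw [hgdef, Sum.map_inr] at h2
        rw [← vR_congr v (Fin.castLE h1n (0 : Fin 1)) (⟨0, by omega⟩ : Fin n) (by simp)]
        exact h2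
    · intro h x
      rcases x with j' | j'
      · rw [hgdef, Sum.map_inl,
          vL_congr v (Fin.castLE h1n j') (⟨0, by omega⟩ : Fin n) (by simp)]
        exact h.1
      · rw [hgdef, Sum.map_inr,
          vR_congr v (Fin.castLE h1n j') (⟨0, by omega⟩ : Fin n) (by simp)]
        exact h.2
  have hBW : Submodule.comap ((Xnn n).mulVecLin ^ (n - 1))
      (Submodule.span ℂ {u0 n hn1 α β}) ⊓ Wperp n hn1 α β = Z := by
    ext v
    rw [Submodule.mem_inf, mem_B_iff hn1 α β hαβ (n - 1) (by omega) v,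
      mem_Wperp_iff hn1 heven, hZmem]
    have hL := vL_congr v (⟨n - 1 - (n - 1), by omega⟩ : Fin n) (⟨0, by omega⟩ : Fin n)
      (show n - 1 - (n - 1) = 0 by omega)
    have hR := vR_congr v (⟨n - 1 - (n - 1), by omega⟩ : Fin n) (⟨0, by omega⟩ : Fin n)
      (show n - 1 - (n - 1) = 0 by omega)
    constructor
    · rintro ⟨⟨hzero, hrel⟩, hW⟩
      rw [hL, hR] at hrel
      constructor
      · have h1 : β * v (Sum.inl (⟨0, by omega⟩ : Fin n)) = 0 := by
          linear_combination ((1 : ℂ) / 2) * hrel + ((1 : ℂ) / 2) * hW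
        exact (mul_eq_zero.mp h1).resolve_left hβ
      · have h1 : α * v (Sum.inr (⟨0, by omega⟩ : Fin n)) = 0 := by
          linear_combination ((1 : ℂ) / 2) * hW - ((1 : ℂ) / 2) * hrel
        exact (mul_eq_zero.mp h1).resolve_left hα
    · rintro ⟨h1, h2⟩
      refine ⟨⟨fun j hj => absurd hj (by omega), ?_⟩, ?_⟩
      · rw [hL, hR, h1, h2]
        ring
      · rw [h1, h2]
        ring
  rw [hBW]
  have hZrank := finrank_ker_funLeft ℂ g hg
  rw [card2n, card2n, ← hZdef] at hZrank
  omega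

lemma dim_B_mid_deg (hn : 2 ≤ n) (hn1 : 1 ≤ n) (heven : Even n) (α β : ℂ)
    (hdeg : α = 0 ∨ β = 0) (hαβ : ¬(α = 0 ∧ β = 0)) :
    finrank ℂ ↥(Submodule.comap ((Xnn n).mulVecLin ^ (n - 1))
      (Submodule.span ℂ {u0 n hn1 α β}) ⊓ Wperp n hn1 α β) = 2 * n - 1 := by
  have hL : ∀ v : (Fin n ⊕ Fin n) → ℂ,
      v (Sum.inl (⟨n - 1 - (n - 1), by omega⟩ : Fin n)) =
        v (Sum.inl (⟨0, by omega⟩ : Fin n)) :=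
    fun v => vL_congr v _ _ (show n - 1 - (n - 1) = 0 by omega)
  have hR : ∀ v : (Fin n ⊕ Fin n) → ℂ,
      v (Sum.inr (⟨n - 1 - (n - 1), by omega⟩ : Fin n)) =
        v (Sum.inr (⟨0, by omega⟩ : Fin n)) :=
    fun v => vR_congr v _ _ (show n - 1 - (n - 1) = 0 by omega)
  rcases hdeg with hα | hβ
  · -- α = 0, so β ≠ 0 ; the space is {v | v (inl 0) = 0}
    have hβ : β ≠ 0 := fun h => hαβ ⟨hα, h⟩
    have hBW : Submodule.comap ((Xnn n).mulVecLin ^ (n - 1))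
        (Submodule.span ℂ {u0 n hn1 α β}) ⊓ Wperp n hn1 α β =
        LinearMap.ker (LinearMap.proj (Sum.inl (⟨0, by omega⟩ : Fin n))
          : ((Fin n ⊕ Fin n) → ℂ) →ₗ[ℂ] ℂ) := by
      ext v
      rw [Submodule.mem_inf, mem_B_iff hn1 α β hαβ (n - 1) (by omega) v,
        mem_Wperp_iff hn1 heven, LinearMap.mem_ker, LinearMap.proj_apply]
      constructor
      · rintro ⟨⟨hzero, hrel⟩, hW⟩
        rw [hL v, hR v, hα] at hrel
        have h1 : β * v (Sum.inl (⟨0, by omega⟩ : Fin n)) = 0 := by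
          linear_combination hrel
        exact (mul_eq_zero.mp h1).resolve_left hβ
      · intro h1
        refine ⟨⟨fun j hj => absurd hj (by omega), ?_⟩, ?_⟩
        · rw [hL v, hR v, h1, hα]
          ring
        · rw [h1, hα]
          ring
    rw [hBW]
    have hne : ∃ x ∈ (⊤ : Submodule ℂ ((Fin n ⊕ Fin n) → ℂ)),
        (LinearMap.proj (Sum.inl (⟨0, by omega⟩ : Fin n))
          : ((Fin n ⊕ Fin n) → ℂ) →ₗ[ℂ] ℂ) x ≠ 0 := by
      refine ⟨Pi.single (Sum.inl (⟨0, by omega⟩ : Fin n)) 1, trivial, ?_⟩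
      rw [LinearMap.proj_apply, Pi.single_eq_same]
      exact one_ne_zero
    have h := finrank_inf_ker_functional (⊤ : Submodule ℂ ((Fin n ⊕ Fin n) → ℂ)) _ hne
    rw [top_inf_eq, finrank_top, Module.finrank_fintype_fun_eq_card, card2n] at h
    omega
  · -- β = 0, so α ≠ 0 ; the space is {v | v (inr 0) = 0}
    have hα : α ≠ 0 := fun h => hαβ ⟨h, hβ⟩
    have hBW : Submodule.comap ((Xnn n).mulVecLin ^ (n - 1))
        (Submodule.span ℂ {u0 n hn1 α β}) ⊓ Wperp n hn1 α β =
        LinearMap.ker (LinearMap.proj (Sum.inr (⟨0, by omega⟩ : Fin n))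
          : ((Fin n ⊕ Fin n) → ℂ) →ₗ[ℂ] ℂ) := by
      ext v
      rw [Submodule.mem_inf, mem_B_iff hn1 α β hαβ (n - 1) (by omega) v,
        mem_Wperp_iff hn1 heven, LinearMap.mem_ker, LinearMap.proj_apply]
      constructor
      · rintro ⟨⟨hzero, hrel⟩, hW⟩
        rw [hL v, hR v, hβ] at hrel
        have h1 : α * v (Sum.inr (⟨0, by omega⟩ : Fin n)) = 0 := by
          linear_combination -hrel
        exact (mul_eq_zero.mp h1).resolve_left hα
      · intro h1
        refine ⟨⟨fun j hj => absurd hj (by omega), ?_⟩, ?_⟩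
        · rw [hL v, hR v, h1, hβ]
          ring
        · rw [h1, hβ]
          ring
    rw [hBW]
    have hne : ∃ x ∈ (⊤ : Submodule ℂ ((Fin n ⊕ Fin n) → ℂ)),
        (LinearMap.proj (Sum.inr (⟨0, by omega⟩ : Fin n))
          : ((Fin n ⊕ Fin n) → ℂ) →ₗ[ℂ] ℂ) x ≠ 0 := by
      refine ⟨Pi.single (Sum.inr (⟨0, by omega⟩ : Fin n)) 1, trivial, ?_⟩
      rw [LinearMap.proj_apply, Pi.single_eq_same]
      exact one_ne_zero
    have h := finrank_inf_ker_functional (⊤ : Submodule ℂ ((Fin n ⊕ Fin n) → ℂ)) _ hne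
    rw [top_inf_eq, finrank_top, Module.finrank_fintype_fun_eq_card, card2n] at h
    omega

end Dims2

set_option synthInstance.maxHeartbeats 1000000 in
set_option maxHeartbeats 1000000 in
/-- For `n ≥ 2` even, the endomorphism induced by `x` on `W₁^⊥/W₁` for
`W₁ = span(α vₙ + β wₙ)` has Jordan type `[n, n-2]` if `α ≠ 0` and `β ≠ 0`
(i.e. `dim Ker(x̄^k) = min(k, n) + min(k, n-2)`), and Jordan type `[n-1, n-1]` if
`W₁ = span(vₙ)` or `W₁ = span(wₙ)` (i.e. `dim Ker(x̄^k) = 2 * min(k, n-1)`). -/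
theorem induced_jordan_type_even (n : ℕ) (hn : 2 ≤ n) (heven : Even n)
    (α β : ℂ) (hαβ : ¬(α = 0 ∧ β = 0))
    (hn1 : 1 ≤ n)
    (hstab : ∀ u ∈ Wperp n hn1 α β, (Xnn n).mulVecLin u ∈ Wperp n hn1 α β)
    (hmap : W1in n hn1 α β ≤
      (W1in n hn1 α β).comap ((Xnn n).mulVecLin.restrict hstab)) :
    (α ≠ 0 → β ≠ 0 →
      ∀ k : ℕ,
        Module.finrank ℂ
          (LinearMap.ker
            ((Submodule.mapQ (W1in n hn1 α β) (W1in n hn1 α β)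
                ((Xnn n).mulVecLin.restrict hstab) hmap) ^ k)) =
          min k n + min k (n - 2)) ∧
    (α = 0 ∨ β = 0 →
      ∀ k : ℕ,
        Module.finrank ℂ
          (LinearMap.ker
            ((Submodule.mapQ (W1in n hn1 α β) (W1in n hn1 α β)
                ((Xnn n).mulVecLin.restrict hstab) hmap) ^ k)) =
          2 * min k (n - 1)) := by
  have hspanW : Submodule.span ℂ {u0 n hn1 α β} ≤ Wperp n hn1 α β := by
    rw [Submodule.span_singleton_le_iff_mem]
    exact u0_mem_Wperp hn hn1 heven α β
  have hp1 : Module.finrank ℂ ↥(W1in n hn1 α β) = 1 := by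
    rw [W1in, (Submodule.comapSubtypeEquivOfLe hspanW).finrank_eq]
    exact finrank_span_singleton (u0_ne_zero hn1 α β hαβ)
  have key : ∀ k : ℕ,
      Module.finrank ℂ
        (LinearMap.ker
          ((Submodule.mapQ (W1in n hn1 α β) (W1in n hn1 α β)
              ((Xnn n).mulVecLin.restrict hstab) hmap) ^ k)) + 1 =
      Module.finrank ℂ
        ↥(Submodule.comap ((Xnn n).mulVecLin ^ k) (Submodule.span ℂ {u0 n hn1 α β})
            ⊓ Wperp n hn1 α β) := by
    intro k
    rw [← (W1in n hn1 α β).mapQ_pow hmap k]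
    have e := finrank_ker_mapQ (W1in n hn1 α β) (((Xnn n).mulVecLin.restrict hstab) ^ k)
      ((W1in n hn1 α β).le_comap_pow_of_le_comap hmap k)
    rw [hp1] at e
    rw [e]
    have hco : Submodule.comap (((Xnn n).mulVecLin.restrict hstab) ^ k) (W1in n hn1 α β) =
        Submodule.comap (Wperp n hn1 α β).subtype
          (Submodule.comap ((Xnn n).mulVecLin ^ k) (Submodule.span ℂ {u0 n hn1 α β})
            ⊓ Wperp n hn1 α β) := by
      ext x
      simp only [Submodule.mem_comap, W1in, Submodule.mem_inf]
      have hcoe : ((((Xnn n).mulVecLin.restrict hstab) ^ k) x : (Fin n ⊕ Fin n) → ℂ) =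
          ((Xnn n).mulVecLin ^ k) (x : (Fin n ⊕ Fin n) → ℂ) := by
        rw [Module.End.pow_restrict k hstab]
        exact LinearMap.restrict_coe_apply _ _ _
      simp only [Submodule.subtype_apply]
      rw [hcoe]
      exact ⟨fun h => ⟨h, x.2⟩, fun h => h.1⟩
    rw [hco]
    exact (Submodule.comapSubtypeEquivOfLe inf_le_right).finrank_eq
  constructor
  · intro hα hβ k
    have hk := key k
    by_cases h1 : n ≤ k
    · rw [B_top hn1 α β k h1, top_inf_eq] at hk
      have hW := dim_Wperp hn hn1 heven α β hαβ
      omega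
    · by_cases h2 : k ≤ n - 2
      · have hs := dim_B_small hn hn1 heven α β hαβ k h2
        rw [hs] at hk
        omega
      · have hk' : k = n - 1 := by omega
        subst hk'
        have hm := dim_B_mid_ne hn hn1 heven α β hα hβ
        rw [hm] at hk
        omega
  · intro hdeg k
    have hk := key k
    by_cases h1 : n ≤ k
    · rw [B_top hn1 α β k h1, top_inf_eq] at hk
      have hW := dim_Wperp hn hn1 heven α β hαβ
      omega
    · by_cases h2 : k ≤ n - 2
      · have hs := dim_B_small hn hn1 heven α β hαβ k h2
        rw [hs] at hk
        omega
      · have hk' : k = n - 1 := by omega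
        subst hk'
        have hm := dim_B_mid_deg hn hn1 heven α β hdeg hαβ
        rw [hm] at hk
        omega
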